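/- arXiv:1406.6471 — 5 statements merged into one kernel-verified Lean document; each statement's English description precedes it below -/
import Mathlib

section
/- For μ > 0, ν > 0 and z in the open unit disk of ℂ, the series 1 + ∑_{n≥1} ((n+1)/((nμ+1)(nν+1))) z^n equals the double integral ∫₀¹∫₀¹ (1 − s^μ t^ν z)^{−2} ds dt. -/
open intervalIntegral MeasureTheory

lemma aux_hasSum {w : ℂ} (hw : ‖w‖ < 1) :
    HasSum (fun n : ℕ => ((n : ℂ) + 1) * w ^ n) ((1 - w) ^ (-2 : ℤ)) := by
  have hw1 : (1 : ℂ) - w ≠ 0 := by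
    intro h
    have : (1:ℂ) = w := by linear_combination h
    rw [← this] at hw; simp at hw
  have hv1 : w / (1 - w) ^ 2 + (1 - w)⁻¹ = ((1 - w) ^ 2)⁻¹ := by
    field_simp
    ring_nf
  have h := (hasSum_coe_mul_geometric_of_norm_lt_one hw).add
    (hasSum_geometric_of_norm_lt_one hw)
  rw [hv1] at h
  have h2 : ((1:ℂ) - w) ^ (-2 : ℤ) = ((1 - w) ^ 2)⁻¹ := by
    rw [zpow_neg]; norm_cast
  rw [h2]
  convert h using 1
  · rfl
  funext n
  ring

lemma gen_hasSum (p : ℝ) (hp : 0 < p) (a : ℕ → ℂ) (ha : Summable fun n => ‖a n‖)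
    (f : ℝ → ℂ)
    (hf : ∀ x ∈ Set.Ioc (0:ℝ) 1, HasSum (fun n => a n * (((x ^ p : ℝ)) : ℂ) ^ n) (f x)) :
    HasSum (fun n => a n / ((((n : ℝ) * p + 1 : ℝ)) : ℂ)) (∫ x in (0:ℝ)..1, f x) := by
  set F : ℕ → ℝ → ℂ := fun n x => a n * (((x ^ p : ℝ)) : ℂ) ^ n with hFdef
  have hcont : ∀ n, Continuous (F n) := fun n =>
    continuous_const.mul ((Complex.continuous_ofReal.comp
      (Real.continuous_rpow_const hp.le)).pow n)
  have hint : ∀ n, MeasureTheory.IntegrableOn (F n) (Set.Ioc (0:ℝ) 1) := fun n =>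
    (hcont n).integrableOn_Ioc
  have hbound : ∀ n, ∀ x ∈ Set.Ioc (0:ℝ) 1, ‖F n x‖ ≤ ‖a n‖ := by
    intro n x hx
    have h1 : (0:ℝ) ≤ x ^ p := Real.rpow_nonneg hx.1.le p
    have h2 : x ^ p ≤ 1 := Real.rpow_le_one hx.1.le hx.2 hp.le
    have : ‖F n x‖ = ‖a n‖ * |x ^ p| ^ n := by
      simp [hFdef, norm_mul, norm_pow]
    rw [this, abs_of_nonneg h1]
    calc ‖a n‖ * (x ^ p) ^ n ≤ ‖a n‖ * 1 :=
          mul_le_mul_of_nonneg_left (pow_le_one₀ h1 h2) (norm_nonneg _)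
      _ = ‖a n‖ := mul_one _
  have hnormint : ∀ n, ∫ x in Set.Ioc (0:ℝ) 1, ‖F n x‖ ≤ ‖a n‖ := by
    intro n
    calc ∫ x in Set.Ioc (0:ℝ) 1, ‖F n x‖ ≤ ∫ _x in Set.Ioc (0:ℝ) 1, ‖a n‖ :=
          MeasureTheory.setIntegral_mono_on (hint n).norm
            (MeasureTheory.integrableOn_const measure_Ioc_lt_top.ne)
            measurableSet_Ioc (hbound n)
      _ = ‖a n‖ := by simp
  have hsum : Summable fun n => ∫ x in Set.Ioc (0:ℝ) 1, ‖F n x‖ :=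
    Summable.of_nonneg_of_le
      (fun n => MeasureTheory.integral_nonneg fun x => norm_nonneg _) hnormint ha
  have key := MeasureTheory.hasSum_integral_of_summable_integral_norm
    (μ := MeasureTheory.volume.restrict (Set.Ioc (0:ℝ) 1)) hint hsum
  have htsum : ∫ x in Set.Ioc (0:ℝ) 1, (∑' n, F n x) = ∫ x in Set.Ioc (0:ℝ) 1, f x := by
    apply MeasureTheory.setIntegral_congr_fun measurableSet_Ioc
    intro x hx
    exact (hf x hx).tsum_eq
  rw [htsum] at key
  have hI : ∀ n : ℕ, (∫ x in Set.Ioc (0:ℝ) 1, (((x ^ p : ℝ)) : ℂ) ^ n)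
      = (((1 / ((n : ℝ) * p + 1) : ℝ)) : ℂ) := by
    intro n
    have hpn : (0:ℝ) < p * n + 1 := by positivity
    rw [← intervalIntegral.integral_of_le zero_le_one]
    have hcongr : ∀ x ∈ Set.uIcc (0:ℝ) 1,
        (((x ^ p : ℝ)) : ℂ) ^ n = (((x ^ (p * (n:ℝ)) : ℝ)) : ℂ) := by
      intro x hx
      rw [Set.uIcc_of_le zero_le_one] at hx
      rw [Real.rpow_mul hx.1, Real.rpow_natCast]
      push_cast
      ring
    rw [intervalIntegral.integral_congr hcongr, intervalIntegral.integral_ofReal]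
    have h0 : (0:ℝ) ≤ p * n := by positivity
    rw [integral_rpow (Or.inl (by linarith))]
    rw [Real.one_rpow, Real.zero_rpow hpn.ne']
    push_cast
    ring
  have heval : ∀ n : ℕ, (∫ x in Set.Ioc (0:ℝ) 1, F n x)
      = a n / ((((n : ℝ) * p + 1 : ℝ)) : ℂ) := by
    intro n
    have hne : ((n : ℝ) * p + 1 : ℝ) ≠ 0 := by positivity
    rw [hFdef]
    simp only
    rw [MeasureTheory.integral_const_mul, hI n]
    push_cast
    field_simp
  rw [intervalIntegral.integral_of_le zero_le_one]
  exact (funext heval : (fun n => ∫ x in Set.Ioc (0:ℝ) 1, F n x) = _) ▸ key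

lemma norm_nat_add_one (n : ℕ) : ‖((n : ℂ) + 1)‖ = (n : ℝ) + 1 := by
  have h : ((n : ℂ) + 1) = ((n + 1 : ℕ) : ℂ) := by push_cast; ring
  rw [h, Complex.norm_natCast]
  push_cast; ring

theorem stmt_2 (μ ν : ℝ) (hμ : 0 < μ) (hν : 0 < ν) (z : ℂ) (hz : ‖z‖ < 1) :
    1 + ∑' n : ℕ, (((n : ℂ) + 2) / ((((n : ℝ) + 1) * μ + 1) * (((n : ℝ) + 1) * ν + 1) : ℝ))
        * z ^ (n + 1)
      = ∫ t in (0:ℝ)..1, ∫ s in (0:ℝ)..1,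
          (1 - ((s ^ μ * t ^ ν : ℝ) : ℂ) * z) ^ (-2 : ℤ) := by
  have hz0 : (0:ℝ) ≤ ‖z‖ := norm_nonneg z
  have hbase : Summable fun n : ℕ => ((n:ℝ) + 1) * ‖z‖ ^ n := by
    have h1 : Summable fun n : ℕ => (n:ℝ) * ‖z‖ ^ n := by
      have := summable_pow_mul_geometric_of_norm_lt_one (R := ℝ) 1
        (r := ‖z‖) (by rwa [Real.norm_eq_abs, abs_of_nonneg hz0])
      simpa using this
    have h2 : Summable fun n : ℕ => ‖z‖ ^ n := summable_geometric_of_lt_one hz0 hz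
    simpa [add_mul] using h1.add h2
  -- inner integral, for each t ∈ (0,1]
  have hinner : ∀ t ∈ Set.Ioc (0:ℝ) 1,
      HasSum (fun n : ℕ => (((n:ℂ) + 1) * (((t ^ ν : ℝ)) : ℂ) ^ n * z ^ n)
          / ((((n:ℝ) * μ + 1 : ℝ)) : ℂ))
        (∫ s in (0:ℝ)..1, (1 - ((s ^ μ * t ^ ν : ℝ) : ℂ) * z) ^ (-2 : ℤ)) := by
    intro t ht
    have ht0 : (0:ℝ) ≤ t ^ ν := Real.rpow_nonneg ht.1.le ν
    have ht1 : t ^ ν ≤ 1 := Real.rpow_le_one ht.1.le ht.2 hν.le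
    apply gen_hasSum μ hμ
    · apply Summable.of_nonneg_of_le (fun n => norm_nonneg _) _ hbase
      intro n
      have : ‖((n:ℂ) + 1) * (((t ^ ν : ℝ)) : ℂ) ^ n * z ^ n‖
          = ((n:ℝ) + 1) * (t ^ ν) ^ n * ‖z‖ ^ n := by
        rw [norm_mul, norm_mul, norm_pow, norm_pow, Complex.norm_real,
          Real.norm_eq_abs, abs_of_nonneg ht0, norm_nat_add_one]
      rw [this]
      calc ((n:ℝ) + 1) * (t ^ ν) ^ n * ‖z‖ ^ n
          ≤ ((n:ℝ) + 1) * 1 * ‖z‖ ^ n := by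
            gcongr
            · exact pow_le_one₀ ht0 ht1
        _ = ((n:ℝ) + 1) * ‖z‖ ^ n := by ring
    · intro s hs
      have hs0 : (0:ℝ) ≤ s ^ μ := Real.rpow_nonneg hs.1.le μ
      have hs1 : s ^ μ ≤ 1 := Real.rpow_le_one hs.1.le hs.2 hμ.le
      have hw : ‖((s ^ μ * t ^ ν : ℝ) : ℂ) * z‖ < 1 := by
        rw [norm_mul, Complex.norm_real, Real.norm_eq_abs,
          abs_of_nonneg (mul_nonneg hs0 ht0)]
        calc (s ^ μ * t ^ ν) * ‖z‖ ≤ 1 * ‖z‖ := by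
              gcongr
              · exact mul_le_one₀ hs1 ht0 ht1
          _ = ‖z‖ := one_mul _
          _ < 1 := hz
      have e : (fun n : ℕ => ((n:ℂ) + 1) * (((t ^ ν : ℝ)) : ℂ) ^ n * z ^ n
            * (((s ^ μ : ℝ)) : ℂ) ^ n)
          = fun n : ℕ => ((n:ℂ) + 1) * (((s ^ μ * t ^ ν : ℝ) : ℂ) * z) ^ n := by
        funext n
        push_cast [mul_pow]
        ring
      rw [e]
      exact aux_hasSum hw
  -- outer integral
  have houter : HasSum
      (fun n : ℕ => ((((n:ℂ) + 1) * z ^ n) / ((((n:ℝ) * μ + 1 : ℝ)) : ℂ))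
          / ((((n:ℝ) * ν + 1 : ℝ)) : ℂ))
      (∫ t in (0:ℝ)..1, ∫ s in (0:ℝ)..1,
        (1 - ((s ^ μ * t ^ ν : ℝ) : ℂ) * z) ^ (-2 : ℤ)) := by
    apply gen_hasSum ν hν
    · apply Summable.of_nonneg_of_le (fun n => norm_nonneg _) _ hbase
      intro n
      have hnn : (0:ℝ) ≤ (n:ℝ) * μ := by positivity
      have hd : (1:ℝ) ≤ (n:ℝ) * μ + 1 := by linarith
      have : ‖(((n:ℂ) + 1) * z ^ n) / ((((n:ℝ) * μ + 1 : ℝ)) : ℂ)‖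
          = (((n:ℝ) + 1) * ‖z‖ ^ n) / ((n:ℝ) * μ + 1) := by
        rw [norm_div, norm_mul, norm_pow, norm_nat_add_one, Complex.norm_real,
          Real.norm_eq_abs, abs_of_nonneg (by positivity)]
      rw [this]
      exact div_le_self (by positivity) hd
    · intro t ht
      have e : (fun n : ℕ => (((n:ℂ) + 1) * z ^ n) / ((((n:ℝ) * μ + 1 : ℝ)) : ℂ)
            * (((t ^ ν : ℝ)) : ℂ) ^ n)
          = fun n : ℕ => (((n:ℂ) + 1) * (((t ^ ν : ℝ)) : ℂ) ^ n * z ^ n)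
            / ((((n:ℝ) * μ + 1 : ℝ)) : ℂ) := by
        funext n; ring
      rw [e]
      exact hinner t ht
  rw [← houter.tsum_eq, Summable.tsum_eq_zero_add houter.summable]
  congr 1
  · norm_num
  · apply tsum_congr
    intro n
    rw [div_div]
    push_cast
    ring
end

section
/- Let μ, ν > 0, 0 ≤ σ < 1 and g(t) = (2/(μν)) ∫₀¹∫₀¹ ((1 − σ(1+swt))/((1−σ)(1+swt)²)) s^{1/μ − 1} w^{1/ν − 1} ds dw − 1 for t ∈ [0,1]. Then g has the power series expansion g(t) = 2 ∑_{n≥0} ((n+1−σ)(−t)^n)/((1−σ)(1+nμ)(1+nν)) − 1, valid for t ∈ [0,1). -/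
open Set intervalIntegral

open MeasureTheory in
/-- Key lemma: integrate a power series against `x ^ (a-1)` on `[0,1]`. -/
lemma key_integral (a : ℝ) (ha : 0 < a) (α : ℕ → ℝ) (hα : Summable fun n => |α n|) :
    ∫ x in (0:ℝ)..1, (∑' n : ℕ, α n * x ^ n) * x ^ (a - 1)
      = ∑' n : ℕ, α n / ((n : ℝ) + a) := by
  have hna : ∀ n : ℕ, (0:ℝ) < (n : ℝ) + a := fun n => by positivity
  have base : ∀ n : ℕ, ∫ x in (0:ℝ)..1, x ^ ((n : ℝ) + a - 1) = 1 / ((n : ℝ) + a) := by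
    intro n
    rw [integral_rpow (Or.inl (by linarith [hna n]))]
    rw [show (n : ℝ) + a - 1 + 1 = (n : ℝ) + a by ring, Real.one_rpow,
      Real.zero_rpow (ne_of_gt (hna n))]
    ring
  have hint : ∀ n : ℕ, IntervalIntegrable (fun x : ℝ => α n * x ^ ((n : ℝ) + a - 1))
      MeasureTheory.volume 0 1 := by
    intro n
    exact (intervalIntegral.intervalIntegrable_rpow' (by linarith [hna n])).const_mul _
  rw [intervalIntegral.integral_of_le zero_le_one]
  have hcongr : ∀ x ∈ Ioc (0:ℝ) 1,
      (∑' n : ℕ, α n * x ^ n) * x ^ (a - 1) = ∑' n : ℕ, α n * x ^ ((n : ℝ) + a - 1) := by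
    intro x hx
    rw [← tsum_mul_right]
    refine tsum_congr fun n => ?_
    rw [show (n : ℝ) + a - 1 = (n : ℝ) + (a - 1) by ring, Real.rpow_add hx.1,
      Real.rpow_natCast, mul_assoc]
  rw [MeasureTheory.setIntegral_congr_fun measurableSet_Ioc hcongr]
  have hInt : ∀ n : ℕ, MeasureTheory.Integrable (fun x : ℝ => α n * x ^ ((n : ℝ) + a - 1))
      (MeasureTheory.volume.restrict (Ioc (0:ℝ) 1)) := fun n =>
    (intervalIntegrable_iff_integrableOn_Ioc_of_le zero_le_one).mp (hint n)
  have hnorm : ∀ n : ℕ, (∫ x in Ioc (0:ℝ) 1, ‖α n * x ^ ((n : ℝ) + a - 1)‖)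
      = |α n| * (1 / ((n : ℝ) + a)) := by
    intro n
    have : ∀ x ∈ Ioc (0:ℝ) 1, ‖α n * x ^ ((n : ℝ) + a - 1)‖
        = |α n| * x ^ ((n : ℝ) + a - 1) := by
      intro x hx
      rw [norm_mul, Real.norm_eq_abs, Real.norm_eq_abs,
        abs_of_nonneg (Real.rpow_nonneg (le_of_lt hx.1) _)]
    rw [MeasureTheory.setIntegral_congr_fun measurableSet_Ioc this,
      MeasureTheory.integral_const_mul, ← intervalIntegral.integral_of_le zero_le_one, base n]
  have hsum : Summable fun n : ℕ => ∫ x in Ioc (0:ℝ) 1, ‖α n * x ^ ((n : ℝ) + a - 1)‖ := by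
    refine Summable.of_nonneg_of_le (fun n => MeasureTheory.integral_nonneg fun x => norm_nonneg _)
      (fun n => ?_) (hα.mul_right a⁻¹)
    rw [hnorm n]
    have h1 : (1 : ℝ) / ((n : ℝ) + a) ≤ a⁻¹ := by
      rw [one_div]
      exact inv_anti₀ ha (le_add_of_nonneg_left (Nat.cast_nonneg n))
    exact mul_le_mul_of_nonneg_left h1 (abs_nonneg _)
  rw [← MeasureTheory.integral_tsum_of_summable_integral_norm hInt hsum]
  refine tsum_congr fun n => ?_
  rw [MeasureTheory.integral_const_mul, ← intervalIntegral.integral_of_le zero_le_one, base n,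
    mul_one_div]

lemma summable_d (σ r : ℝ) (hσ0 : 0 ≤ σ) (hσ1 : σ < 1) (hr : |r| < 1) :
    Summable fun n : ℕ => |(((n : ℝ) + 1 - σ) / (1 - σ)) * r ^ n| := by
  have hb : Summable fun n : ℕ => (1 / (1 - σ)) * (((n : ℝ) + 1) * |r| ^ n) := by
    refine Summable.mul_left _ ?_
    have h1 : Summable fun n : ℕ => (n : ℝ) * |r| ^ n := by
      have := summable_pow_mul_geometric_of_norm_lt_one (R := ℝ) 1
        (r := |r|) (by rwa [Real.norm_eq_abs, abs_abs])
      simpa using this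
    have h2 : Summable fun n : ℕ => |r| ^ n :=
      summable_geometric_of_lt_one (abs_nonneg r) hr
    simpa [add_mul] using h1.add h2
  refine Summable.of_nonneg_of_le (fun n => abs_nonneg _) (fun n => ?_) hb
  have h1σ : (0:ℝ) < 1 - σ := by linarith
  have hn0 : (0:ℝ) ≤ (n : ℝ) := Nat.cast_nonneg n
  rw [abs_mul, abs_pow]
  have habs : |((n : ℝ) + 1 - σ) / (1 - σ)| ≤ ((n : ℝ) + 1) / (1 - σ) := by
    rw [abs_div, abs_of_pos h1σ]
    gcongr
    exact abs_le.mpr ⟨by linarith, by linarith⟩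
  calc |((n : ℝ) + 1 - σ) / (1 - σ)| * |r| ^ n
      ≤ (((n : ℝ) + 1) / (1 - σ)) * |r| ^ n :=
        mul_le_mul_of_nonneg_right habs (pow_nonneg (abs_nonneg r) n)
    _ = (1 / (1 - σ)) * (((n : ℝ) + 1) * |r| ^ n) := by ring

lemma sum_pow_mul (σ x : ℝ) (hσ0 : 0 ≤ σ) (hσ1 : σ < 1) (hx0 : 0 ≤ x) (hx1 : x < 1) :
    (1 - σ * (1 + x)) / ((1 - σ) * (1 + x) ^ 2)
      = ∑' n : ℕ, (((n : ℝ) + 1 - σ) / (1 - σ)) * (-x) ^ n := by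
  have hr : ‖(-x)‖ < 1 := by
    rw [norm_neg, Real.norm_eq_abs, abs_of_nonneg hx0]; exact hx1
  have hs1 : Summable fun n : ℕ => (-x) ^ n := summable_geometric_of_norm_lt_one hr
  have hs2 : Summable fun n : ℕ => (n : ℝ) * (-x) ^ n := by
    have := summable_pow_mul_geometric_of_norm_lt_one (R := ℝ) 1 hr
    simpa using this
  have key : ∀ n : ℕ, (((n : ℝ) + 1 - σ) / (1 - σ)) * (-x) ^ n
      = (-x) ^ n + (1 / (1 - σ)) * ((n : ℝ) * (-x) ^ n) := by
    intro n
    have h1σ : (1:ℝ) - σ ≠ 0 := by linarith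
    field_simp
    ring
  rw [tsum_congr key, Summable.tsum_add hs1 (hs2.mul_left _), tsum_mul_left,
    tsum_geometric_of_norm_lt_one hr, tsum_coe_mul_geometric_of_norm_lt_one hr]
  have h1x : (0:ℝ) < 1 + x := by linarith
  have h1σ : (1:ℝ) - σ ≠ 0 := by linarith
  rw [show (1:ℝ) - -x = 1 + x by ring]
  field_simp
  ring

theorem stmt_6 (μ ν σ : ℝ) (hμ : 0 < μ) (hν : 0 < ν) (hσ0 : 0 ≤ σ) (hσ1 : σ < 1) :
    ∀ t ∈ Ico (0:ℝ) 1,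
      (2 / (μ * ν)) *
          (∫ w in (0:ℝ)..1, ∫ s in (0:ℝ)..1,
            ((1 - σ * (1 + s * w * t)) / ((1 - σ) * (1 + s * w * t) ^ 2)) *
              s ^ (1 / μ - 1) * w ^ (1 / ν - 1)) - 1
        = 2 * (∑' n : ℕ, (((n : ℝ) + 1 - σ) * (-t) ^ n) /
            ((1 - σ) * (1 + (n : ℝ) * μ) * (1 + (n : ℝ) * ν))) - 1 := by
  rintro t ⟨ht0, ht1⟩
  have ha : (0:ℝ) < 1 / μ := by positivity
  have hb : (0:ℝ) < 1 / ν := by positivity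
  set d : ℕ → ℝ := fun n => ((n : ℝ) + 1 - σ) / (1 - σ) with hd
  set β : ℕ → ℝ := fun n => d n * (-t) ^ n / ((n : ℝ) + 1 / μ) with hβ
  -- inner integral
  have h_inner : ∀ w ∈ Icc (0:ℝ) 1,
      (∫ s in (0:ℝ)..1,
          ((1 - σ * (1 + s * w * t)) / ((1 - σ) * (1 + s * w * t) ^ 2)) *
            s ^ (1 / μ - 1) * w ^ (1 / ν - 1))
        = (∑' n : ℕ, β n * w ^ n) * w ^ (1 / ν - 1) := by
    intro w hw
    have hwt0 : 0 ≤ w * t := mul_nonneg hw.1 ht0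
    have hwt1 : w * t < 1 := lt_of_le_of_lt
      (mul_le_of_le_one_left ht0 hw.2) ht1
    rw [intervalIntegral.integral_mul_const]
    congr 1
    have step1 : (∫ s in (0:ℝ)..1,
        ((1 - σ * (1 + s * w * t)) / ((1 - σ) * (1 + s * w * t) ^ 2)) * s ^ (1 / μ - 1))
        = ∫ s in (0:ℝ)..1, (∑' n : ℕ, (d n * (-(w * t)) ^ n) * s ^ n) * s ^ (1 / μ - 1) := by
      refine intervalIntegral.integral_congr fun s hs => ?_
      rw [uIcc_of_le zero_le_one] at hs
      have hswt0 : 0 ≤ s * w * t := mul_nonneg (mul_nonneg hs.1 hw.1) ht0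
      have hswt1 : s * w * t < 1 := by
        calc s * w * t ≤ 1 * (w * t) := by
              rw [mul_assoc]
              exact mul_le_mul_of_nonneg_right hs.2 hwt0
          _ < 1 := by rwa [one_mul]
      rw [sum_pow_mul σ (s * w * t) hσ0 hσ1 hswt0 hswt1]
      congr 1
      refine tsum_congr fun n => ?_
      rw [show -(s * w * t) = -(w * t) * s by ring, mul_pow]
      ring
    rw [step1, key_integral (1 / μ) ha _ (summable_d σ (-(w * t)) hσ0 hσ1
      (by rw [abs_neg, abs_of_nonneg hwt0]; exact hwt1))]
    refine tsum_congr fun n => ?_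
    rw [hβ]
    simp only []
    rw [show -(w * t) = -t * w by ring, mul_pow]
    ring
  have houter : (∫ w in (0:ℝ)..1, ∫ s in (0:ℝ)..1,
        ((1 - σ * (1 + s * w * t)) / ((1 - σ) * (1 + s * w * t) ^ 2)) *
          s ^ (1 / μ - 1) * w ^ (1 / ν - 1))
      = ∑' n : ℕ, β n / ((n : ℝ) + 1 / ν) := by
    have hsβ : Summable fun n : ℕ => |β n| := by
      refine Summable.of_nonneg_of_le (fun n => abs_nonneg _) (fun n => ?_)
        ((summable_d σ (-t) hσ0 hσ1 (by rwa [abs_neg, abs_of_nonneg ht0])).mul_right μ)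
      rw [hβ]
      simp only [abs_div]
      have h1 : (0:ℝ) < (n : ℝ) + 1 / μ := by positivity
      have hn0 : (0:ℝ) ≤ (n : ℝ) := Nat.cast_nonneg n
      have key1 : (1:ℝ) ≤ μ * ((n : ℝ) + 1 / μ) := by
        rw [mul_add, mul_one_div, div_self (ne_of_gt hμ)]
        nlinarith
      rw [abs_of_pos h1, div_le_iff₀ h1]
      nlinarith [mul_le_mul_of_nonneg_left key1 (abs_nonneg (d n * (-t) ^ n))]
    rw [← key_integral (1 / ν) hb β hsβ]
    refine intervalIntegral.integral_congr fun w hw => ?_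
    rw [uIcc_of_le zero_le_one] at hw
    exact h_inner w hw
  rw [houter]
  congr 1
  rw [← tsum_mul_left, ← tsum_mul_left]
  refine tsum_congr fun n => ?_
  rw [hβ, hd]
  simp only []
  have h1 : (0:ℝ) < (n : ℝ) + 1 / μ := by positivity
  have h2 : (0:ℝ) < (n : ℝ) + 1 / ν := by positivity
  have h3 : (0:ℝ) < 1 + (n : ℝ) * μ := by positivity
  have h4 : (0:ℝ) < 1 + (n : ℝ) * ν := by positivity
  have h5 : (1:ℝ) - σ ≠ 0 := by linarith
  field_simp
  ring
end

section
/- Let μ, ν > 0, 0 ≤ σ < 1 and q(t) = (1/(μν)) ∫₀¹∫₀¹ ((1 − σ − (1+σ)swt)/((1−σ)(1+swt)³)) s^{1/μ − 1} w^{1/ν − 1} ds dw for t ∈ [0,1]. Then q has the power series expansion q(t) = ∑_{n≥0} ((n+1)(n+1−σ)(−t)^n)/((1−σ)(1+nμ)(1+nν)), valid for t ∈ [0,1). -/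
open Set intervalIntegral MeasureTheory

lemma chtwo1 (n : ℕ) : (((n+2).choose 2 : ℕ) : ℝ) = ((n:ℝ)+1)*((n:ℝ)+2)/2 := by
  rw [Nat.choose_two_right, show n+2-1 = n+1 from rfl]
  have h2 : 2 ∣ (n+2) * (n+1) := by
    rw [mul_comm]; exact (Nat.even_mul_succ_self (n+1)).two_dvd
  rw [Nat.cast_div h2 (by norm_num)]
  push_cast; ring

lemma chtwo2 (n : ℕ) : (((n+1).choose 2 : ℕ) : ℝ) = (n:ℝ)*((n:ℝ)+1)/2 := by
  rw [Nat.choose_two_right, show n+1-1 = n from rfl]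
  have h2 : 2 ∣ (n+1) * n := by
    rw [mul_comm]; exact (Nat.even_mul_succ_self n).two_dvd
  rw [Nat.cast_div h2 (by norm_num)]
  push_cast; ring

lemma sumaux {t : ℝ} (h : |t| < 1) : Summable (fun n : ℕ => ((n:ℝ)+1)^2 * t^n) := by
  have hn : ‖t‖ < 1 := by rwa [Real.norm_eq_abs]
  have h2 := summable_pow_mul_geometric_of_norm_lt_one (R := ℝ) 2 hn
  have h1 := summable_pow_mul_geometric_of_norm_lt_one (R := ℝ) 1 hn
  have h0 := summable_pow_mul_geometric_of_norm_lt_one (R := ℝ) 0 hn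
  have := (h2.add (h1.mul_left 2)).add h0
  refine this.congr fun n => ?_
  push_cast; ring

-- power series for the kernel
lemma lemB (σ : ℝ) {x : ℝ} (hx0 : 0 ≤ x) (hx1 : x < 1) :
    HasSum (fun n : ℕ => ((n:ℝ)+1)*((n:ℝ)+1-σ) * (-x)^n)
      ((1 - σ - (1+σ)*x) / (1+x)^3) := by
  have hr : ‖(-x : ℝ)‖ < 1 := by rw [norm_neg, Real.norm_eq_abs, abs_of_nonneg hx0]; exact hx1
  have A := hasSum_choose_mul_geometric_of_norm_lt_one (𝕜 := ℝ) 2 hr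
  rw [show (1 : ℝ) - -x = 1 + x by ring] at A
  -- shifted sum
  have B0 : HasSum (fun n : ℕ => (-x) * (((n+2).choose 2 : ℕ) * (-x)^n)) ((-x) * (1/(1+x)^3)) :=
    A.mul_left _
  have B1 : HasSum (fun n : ℕ => (((n+1+1).choose 2 : ℕ) : ℝ) * (-x)^(n+1)) ((-x) * (1/(1+x)^3)) := by
    refine B0.congr_fun fun n => ?_
    push_cast [pow_succ]
    ring
  have B : HasSum (fun n : ℕ => (((n+1).choose 2 : ℕ) : ℝ) * (-x)^n)
      ((-x) * (1/(1+x)^3) + (((0+1).choose 2 : ℕ) : ℝ) * (-x)^0) := by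
    have := (hasSum_nat_add_iff (f := fun n : ℕ => (((n+1).choose 2 : ℕ) : ℝ) * (-x)^n) 1).mp B1
    simpa using this
  have C := (A.mul_left (1-σ)).add (B.mul_left (1+σ))
  have h3 : (1+x)^3 ≠ 0 := by positivity
  have hv : (1-σ)*(1/(1+x)^(2+1)) + (1+σ)*((-x)*(1/(1+x)^3) + (((0+1).choose 2 : ℕ) : ℝ) * (-x)^0)
      = (1 - σ - (1+σ)*x) / (1+x)^3 := by
    norm_num
    field_simp
    ring
  rw [← hv]
  refine C.congr_fun fun n => ?_
  rw [chtwo1, chtwo2]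
  ring

lemma rpow_integrableOn {p : ℝ} (hp : -1 < p) :
    MeasureTheory.IntegrableOn (fun s : ℝ => s ^ p) (Ioc (0:ℝ) 1) := by
  have := intervalIntegrable_rpow' (a := (0:ℝ)) (b := 1) hp
  rwa [intervalIntegrable_iff_integrableOn_Ioc_of_le zero_le_one] at this

lemma pow_int {μ : ℝ} (hμ : 0 < μ) (n : ℕ) :
    ∫ s in Ioc (0:ℝ) 1, s ^ ((n:ℝ) + 1/μ - 1) = μ/(1+(n:ℝ)*μ) := by
  have hpos : (0:ℝ) < (n:ℝ) + 1/μ := by positivity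
  rw [← intervalIntegral.integral_of_le zero_le_one,
    integral_rpow (Or.inl (by linarith))]
  rw [show (n:ℝ) + 1/μ - 1 + 1 = (n:ℝ) + 1/μ by ring, Real.one_rpow,
    Real.zero_rpow (ne_of_gt hpos)]
  field_simp
  ring

lemma rpow_split {s : ℝ} (hs : 0 < s) (n : ℕ) (a : ℝ) :
    s ^ ((n:ℝ) + a - 1) = s ^ (n:ℕ) * s ^ (a - 1) := by
  rw [← Real.rpow_natCast s n, ← Real.rpow_add hs]
  ring_nf

lemma interchange {μ ρ M : ℝ} (hμ : 0 < μ) (hρ0 : 0 ≤ ρ) (hρ1 : ρ < 1) (hM : 0 ≤ M)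
    (C : ℕ → ℝ) (hC : ∀ n, |C n| ≤ M * ((n:ℝ)+1)^2 * ρ ^ n) :
    HasSum (fun n : ℕ => C n * (μ/(1+(n:ℝ)*μ)))
      (∫ s in Ioc (0:ℝ) 1, ∑' n : ℕ, C n * s ^ ((n:ℝ) + 1/μ - 1)) := by
  have hp : ∀ n : ℕ, (-1:ℝ) < (n:ℝ) + 1/μ - 1 := by
    intro n
    have : (0:ℝ) ≤ (n:ℝ) := n.cast_nonneg
    have : (0:ℝ) < 1/μ := by positivity
    linarith
  set F : ℕ → ℝ → ℝ := fun n s => C n * s ^ ((n:ℝ) + 1/μ - 1) with hF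
  have hint : ∀ n, MeasureTheory.Integrable (F n)
      (MeasureTheory.volume.restrict (Ioc (0:ℝ) 1)) := fun n =>
    ((rpow_integrableOn (hp n)).const_mul (C n))
  have hnorm : ∀ n, (∫ s in Ioc (0:ℝ) 1, ‖F n s‖) = |C n| * (μ/(1+(n:ℝ)*μ)) := by
    intro n
    have : (∫ s in Ioc (0:ℝ) 1, ‖F n s‖)
        = ∫ s in Ioc (0:ℝ) 1, |C n| * s ^ ((n:ℝ) + 1/μ - 1) := by
      refine MeasureTheory.setIntegral_congr_fun measurableSet_Ioc fun s hs => ?_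
      simp only [hF, Real.norm_eq_abs, abs_mul,
        abs_of_nonneg (Real.rpow_nonneg hs.1.le _)]
    rw [this, MeasureTheory.integral_const_mul, pow_int hμ n]
  have hsum : Summable (fun n => ∫ s in Ioc (0:ℝ) 1, ‖F n s‖) := by
    refine Summable.of_nonneg_of_le (fun n => ?_) (fun n => ?_)
      (((sumaux (by rwa [abs_of_nonneg hρ0])).mul_left (M*μ)))
    · exact MeasureTheory.integral_nonneg fun s => norm_nonneg _
    · rw [hnorm n]
      have h1 : μ/(1+(n:ℝ)*μ) ≤ μ := by
        apply div_le_self hμ.le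
        have : (0:ℝ) ≤ (n:ℝ)*μ := by positivity
        linarith
      have h2 : (0:ℝ) ≤ μ/(1+(n:ℝ)*μ) := by positivity
      calc |C n| * (μ/(1+(n:ℝ)*μ)) ≤ (M * ((n:ℝ)+1)^2 * ρ^n) * μ := by
            apply mul_le_mul (hC n) h1 h2
            positivity
        _ = M*μ * (((n:ℝ)+1)^2 * ρ^n) := by ring
  have H := MeasureTheory.hasSum_integral_of_summable_integral_norm hint hsum
  refine H.congr_fun fun n => ?_
  rw [hF]
  rw [MeasureTheory.integral_const_mul, pow_int hμ n]

theorem stmt_7 (μ ν σ : ℝ) (hμ : 0 < μ) (hν : 0 < ν) (hσ0 : 0 ≤ σ) (hσ1 : σ < 1) :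
    ∀ t ∈ Ico (0:ℝ) 1,
      (1 / (μ * ν)) *
          (∫ w in (0:ℝ)..1, ∫ s in (0:ℝ)..1,
            ((1 - σ - (1 + σ) * s * w * t) / ((1 - σ) * (1 + s * w * t) ^ 3)) *
              s ^ (1 / μ - 1) * w ^ (1 / ν - 1))
        = ∑' n : ℕ, (((n : ℝ) + 1) * ((n : ℝ) + 1 - σ) * (-t) ^ n) /
            ((1 - σ) * (1 + (n : ℝ) * μ) * (1 + (n : ℝ) * ν)) := by
  intro t ht
  obtain ⟨ht0, ht1⟩ := ht
  have hσ : (0:ℝ) < 1 - σ := by linarith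
  set c : ℕ → ℝ := fun n => ((n:ℝ)+1)*((n:ℝ)+1-σ) with hc
  have hcnn : ∀ n, 0 ≤ c n := fun n => by
    have : (0:ℝ) ≤ (n:ℝ) := n.cast_nonneg
    have h1 : (0:ℝ) < (n:ℝ)+1-σ := by linarith
    positivity
  have hcle : ∀ n, c n ≤ ((n:ℝ)+1)^2 := fun n => by
    simp only [hc]
    have h : (0:ℝ) ≤ (n:ℝ) := n.cast_nonneg
    nlinarith [mul_nonneg (by linarith : (0:ℝ) ≤ (n:ℝ)+1) hσ0]
  set D : ℕ → ℝ := fun n => (1/(1-σ)) * c n * (μ/(1+(n:ℝ)*μ)) * (-t)^n with hD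
  -- Step 1: inner integral value for each w ∈ Ioc 0 1
  have hinner : ∀ w ∈ Ioc (0:ℝ) 1,
      (∫ s in (0:ℝ)..1,
        ((1 - σ - (1 + σ) * s * w * t) / ((1 - σ) * (1 + s * w * t) ^ 3)) *
          s ^ (1 / μ - 1) * w ^ (1 / ν - 1))
      = ∑' n : ℕ, D n * w ^ ((n:ℝ) + 1/ν - 1) := by
    intro w hw
    have hw0 : 0 < w := hw.1
    have hw1 : w ≤ 1 := hw.2
    have hr0 : 0 ≤ w * t := mul_nonneg hw0.le ht0
    have hr1 : w * t < 1 := lt_of_le_of_lt (mul_le_of_le_one_left ht0 hw1) ht1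
    have hCbd : ∀ n, |c n * (-(w*t))^n| ≤ 1 * ((n:ℝ)+1)^2 * (w*t) ^ n := by
      intro n
      rw [abs_mul, abs_pow, abs_neg, abs_of_nonneg hr0, abs_of_nonneg (hcnn n), one_mul]
      exact mul_le_mul_of_nonneg_right (hcle n) (pow_nonneg hr0 n)
    have A := interchange hμ hr0 hr1 zero_le_one (fun n => c n * (-(w*t))^n) hCbd
    -- rewrite the tsum inside A's integral
    have hA2 : (∫ s in Ioc (0:ℝ) 1, ∑' n : ℕ, (c n * (-(w*t))^n) * s ^ ((n:ℝ) + 1/μ - 1))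
        = ∫ s in Ioc (0:ℝ) 1,
            ((1 - σ - (1+σ)*(s*(w*t))) / (1+s*(w*t))^3) * s ^ (1/μ - 1) := by
      refine MeasureTheory.setIntegral_congr_fun measurableSet_Ioc fun s hs => ?_
      have hs0 : 0 < s := hs.1
      have hx0 : 0 ≤ s * (w*t) := mul_nonneg hs0.le hr0
      have hx1 : s * (w*t) < 1 := lt_of_le_of_lt (mul_le_of_le_one_left hr0 hs.2) hr1
      have hS := (lemB σ hx0 hx1).mul_right (s ^ (1/μ - 1))
      refine Eq.trans (tsum_congr fun n => ?_) hS.tsum_eq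
      rw [rpow_split hs0 n (1/μ)]
      rw [show (-(s*(w*t)))^n = (-(w*t))^n * s^n by rw [← mul_pow]; ring_nf]
      ring
    rw [hA2] at A
    -- now express the interval integral
    rw [intervalIntegral.integral_of_le zero_le_one]
    have hA3 : (∫ s in Ioc (0:ℝ) 1,
        ((1 - σ - (1 + σ) * s * w * t) / ((1 - σ) * (1 + s * w * t) ^ 3)) *
          s ^ (1 / μ - 1) * w ^ (1 / ν - 1))
        = (w ^ (1/ν - 1) / (1-σ)) * ∫ s in Ioc (0:ℝ) 1,
            ((1 - σ - (1+σ)*(s*(w*t))) / (1+s*(w*t))^3) * s ^ (1/μ - 1) := by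
      rw [← MeasureTheory.integral_const_mul]
      refine MeasureTheory.setIntegral_congr_fun measurableSet_Ioc fun s hs => ?_
      have hb : (0:ℝ) < 1 + s * w * t := by
        have : 0 ≤ s * w * t := mul_nonneg (mul_nonneg hs.1.le hw0.le) ht0
        linarith
      simp only [div_eq_mul_inv, mul_inv]
      ring
    rw [hA3, ← A.tsum_eq, ← tsum_mul_left]
    refine tsum_congr fun n => ?_
    have hwt : (-(w*t) : ℝ)^n = (-t)^n * w^n := by
      rw [show -(w*t) = (-t)*w by ring, mul_pow]
    simp only [hD, rpow_split hw0 n (1/ν), hwt]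
    ring
  -- Step 2: outer interchange
  have hDbd : ∀ n, |D n| ≤ (μ/(1-σ)) * ((n:ℝ)+1)^2 * t ^ n := by
    intro n
    have h1 : (0:ℝ) < 1 + (n:ℝ)*μ := by positivity
    have h2 : μ/(1+(n:ℝ)*μ) ≤ μ := by
      apply div_le_self hμ.le
      have : (0:ℝ) ≤ (n:ℝ)*μ := by positivity
      linarith
    have h3 : (0:ℝ) ≤ μ/(1+(n:ℝ)*μ) := by positivity
    simp only [hD]
    rw [abs_mul, abs_pow, abs_neg, abs_of_nonneg ht0, abs_mul, abs_mul,
      abs_of_nonneg (hcnn n), abs_of_nonneg h3, abs_of_nonneg (by positivity : (0:ℝ) ≤ 1/(1-σ))]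
    have key : c n * (μ/(1+(n:ℝ)*μ)) ≤ ((n:ℝ)+1)^2 * μ :=
      mul_le_mul (hcle n) h2 h3 (by positivity)
    calc 1/(1-σ) * c n * (μ/(1+(n:ℝ)*μ)) * t^n
        = (c n * (μ/(1+(n:ℝ)*μ))) * (1/(1-σ) * t^n) := by ring
      _ ≤ (((n:ℝ)+1)^2 * μ) * (1/(1-σ) * t^n) := by
          apply mul_le_mul_of_nonneg_right key
          positivity
      _ = (μ/(1-σ)) * ((n:ℝ)+1)^2 * t^n := by ring
  have B := interchange hν ht0 ht1 (by positivity : (0:ℝ) ≤ μ/(1-σ)) D hDbd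
  have hB2 : (∫ w in Ioc (0:ℝ) 1, ∑' n : ℕ, D n * w ^ ((n:ℝ) + 1/ν - 1))
      = ∫ w in Ioc (0:ℝ) 1, ∫ s in (0:ℝ)..1,
          ((1 - σ - (1 + σ) * s * w * t) / ((1 - σ) * (1 + s * w * t) ^ 3)) *
            s ^ (1 / μ - 1) * w ^ (1 / ν - 1) :=
    MeasureTheory.setIntegral_congr_fun measurableSet_Ioc fun w hw => (hinner w hw).symm
  rw [hB2] at B
  rw [intervalIntegral.integral_of_le zero_le_one, ← B.tsum_eq, ← tsum_mul_left]
  refine tsum_congr fun n => ?_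
  have h1 : (0:ℝ) < 1 + (n:ℝ)*μ := by positivity
  have h2 : (0:ℝ) < 1 + (n:ℝ)*ν := by positivity
  rw [hD, hc]
  field_simp
end

section
/- Let β < 1, γ ≥ 0, and μ, ν ≥ 0 with μ + ν = α − γ, μν = γ. The function f(z) = z + ∑_{n≥1} (2(1−β)/((nμ+1)(nν+1))) z^{n+1} satisfies the differential equation (1 − α + 2γ) f(z)/z + (α − 2γ) f′(z) + γ z f″(z) = β + (1−β)(1+z)/(1−z) on the open unit disk. -/
open Metric

lemma aux_summable_poly (k : ℕ) {r : ℝ} (h0 : 0 < r) (h1 : r < 1) :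
    Summable (fun n : ℕ => ((n : ℝ) + 1) ^ k * r ^ n) := by
  have hr : ‖r‖ < 1 := by rw [Real.norm_eq_abs, abs_of_pos h0]; exact h1
  have h2 : Summable (fun n : ℕ => ((n : ℝ)) ^ k * r ^ n) :=
    summable_pow_mul_geometric_of_norm_lt_one k hr
  have h3 : Summable (fun n : ℕ => ((n : ℝ) + 1) ^ k * r ^ (n + 1)) := by
    have := (summable_nat_add_iff 1).mpr h2
    simpa using this
  have h4 := h3.mul_right r⁻¹
  refine h4.congr fun n => ?_
  field_simp [pow_succ]
  ring

lemma aux_summable (b : ℕ → ℂ) (C : ℝ) (k m : ℕ)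
    (hb : ∀ n, ‖b n‖ ≤ C * ((n : ℝ) + 1) ^ k) {z : ℂ} (hz : ‖z‖ < 1) :
    Summable (fun n : ℕ => b n * z ^ (n + m)) := by
  set r : ℝ := (‖z‖ + 1) / 2 with hr
  have hz0 : (0:ℝ) ≤ ‖z‖ := norm_nonneg z
  have hr0 : 0 < r := by positivity
  have hr1 : r < 1 := by rw [hr]; linarith
  have hzr : ‖z‖ ≤ r := by rw [hr]; linarith
  have hC : 0 ≤ C := by
    have := hb 0
    have h0 : (0:ℝ) ≤ ‖b 0‖ := norm_nonneg _
    simpa using le_trans h0 this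
  refine Summable.of_norm_bounded (g := fun n => (C * r ^ m) * (((n : ℝ) + 1) ^ k * r ^ n)) 
    (((aux_summable_poly k hr0 hr1).mul_left _)) fun n => ?_
  have hn1 : (0:ℝ) ≤ (n : ℝ) + 1 := by positivity
  calc ‖b n * z ^ (n + m)‖ = ‖b n‖ * ‖z‖ ^ (n + m) := by
        rw [norm_mul, norm_pow]
    _ ≤ (C * ((n : ℝ) + 1) ^ k) * r ^ (n + m) := by
        gcongr
        exact hb n
    _ = (C * r ^ m) * (((n : ℝ) + 1) ^ k * r ^ n) := by rw [pow_add]; ring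

lemma aux_hasDerivAt (b : ℕ → ℂ) (C : ℝ) (k m : ℕ)
    (hb : ∀ n, ‖b n‖ ≤ C * ((n : ℝ) + 1) ^ k) {z : ℂ} (hz : ‖z‖ < 1) :
    HasDerivAt (fun w : ℂ => ∑' n : ℕ, b n * w ^ (n + m + 1))
      (∑' n : ℕ, b n * ((n : ℂ) + m + 1) * z ^ (n + m)) z := by
  set r : ℝ := (‖z‖ + 1) / 2 with hr
  have hz0 : (0:ℝ) ≤ ‖z‖ := norm_nonneg z
  have hr0 : 0 < r := by positivity
  have hr1 : r < 1 := by rw [hr]; linarith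
  have hzr : ‖z‖ < r := by rw [hr]; linarith
  have hC : 0 ≤ C := by
    have := hb 0
    have h0 : (0:ℝ) ≤ ‖b 0‖ := norm_nonneg _
    simpa using le_trans h0 this
  have hu : Summable (fun n : ℕ =>
      (C * ((m : ℝ) + 1) * r ^ m) * (((n : ℝ) + 1) ^ (k + 1) * r ^ n)) :=
    (aux_summable_poly (k + 1) hr0 hr1).mul_left _
  have := hasDerivAt_tsum_of_isPreconnected hu isOpen_ball (convex_ball (0:ℂ) r).isPreconnected
    (g := fun n w => b n * w ^ (n + m + 1))
    (g' := fun n w => b n * ((n : ℂ) + m + 1) * w ^ (n + m))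
    (fun n w _ => ?_) (fun n w hw => ?_) (mem_ball_self hr0) ?_ (by simpa using hzr)
  · exact this
  · have h := (hasDerivAt_pow (n + m + 1) w).const_mul (b n)
    refine h.congr_deriv ?_
    rw [Nat.add_sub_cancel]
    push_cast
    ring
  · have hwlt : ‖w‖ < r := by simpa [mem_ball, dist_eq_norm] using hw
    have hn1 : (0:ℝ) ≤ (n : ℝ) + 1 := by positivity
    have hcast : ‖((n : ℂ) + m + 1)‖ = (n : ℝ) + m + 1 := by
      have : ((n : ℂ) + m + 1) = (((n + m + 1 : ℕ) : ℝ) : ℂ) := by push_cast; ring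
      rw [this, Complex.norm_real, Real.norm_eq_abs, abs_of_nonneg (by positivity)]
      push_cast; ring
    calc ‖b n * ((n : ℂ) + m + 1) * w ^ (n + m)‖
        = ‖b n‖ * ((n : ℝ) + m + 1) * ‖w‖ ^ (n + m) := by
          rw [norm_mul, norm_mul, norm_pow, hcast]
      _ ≤ (C * ((n : ℝ) + 1) ^ k) * ((n : ℝ) + m + 1) * r ^ (n + m) := by
          gcongr
          exact hb n
      _ ≤ (C * ((n : ℝ) + 1) ^ k) * (((m : ℝ) + 1) * ((n : ℝ) + 1)) * r ^ (n + m) := by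
          gcongr
          nlinarith [Nat.cast_nonneg (α := ℝ) n, Nat.cast_nonneg (α := ℝ) m]
      _ = (C * ((m : ℝ) + 1) * r ^ m) * (((n : ℝ) + 1) ^ (k + 1) * r ^ n) := by
          rw [pow_add, pow_succ]; ring
  · refine Summable.congr summable_zero fun n => ?_
    simp

noncomputable def coefC (β μ ν : ℝ) (n : ℕ) : ℂ :=
  ((2 * (1 - β) / ((((n : ℝ) + 1) * μ + 1) * (((n : ℝ) + 1) * ν + 1)) : ℝ) : ℂ)

theorem stmt_11 (α γ μ ν β : ℝ) (hβ : β < 1) (hα : 0 ≤ α) (hγ : 0 ≤ γ)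
    (hμ : 0 ≤ μ) (hν : 0 ≤ ν) (hsum : μ + ν = α - γ) (hprod : μ * ν = γ)
    (f : ℂ → ℂ)
    (hf : f = fun z : ℂ => z + ∑' n : ℕ,
      ((2 * (1 - β) / ((((n : ℝ) + 1) * μ + 1) * (((n : ℝ) + 1) * ν + 1)) : ℝ) : ℂ) *
        z ^ (n + 2)) :
    ∀ z ∈ ball (0:ℂ) 1, z ≠ 0 →
      ((1 - α + 2 * γ : ℝ) : ℂ) * f z / z + ((α - 2 * γ : ℝ) : ℂ) * deriv f z +
          (γ : ℂ) * z * deriv (deriv f) z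
        = (β : ℂ) + ((1 - β : ℝ) : ℂ) * (1 + z) / (1 - z) := by
  intro z hz hz0
  have hz1 : ‖z‖ < 1 := by simpa [mem_ball, dist_eq_norm] using hz
  set c : ℕ → ℂ := coefC β μ ν with hcdef
  have hfc : f = fun z : ℂ => z + ∑' n : ℕ, c n * z ^ (n + 2) := hf
  -- denominator facts
  have hD1 : ∀ n : ℕ, (1:ℝ) ≤ (((n : ℝ) + 1) * μ + 1) * (((n : ℝ) + 1) * ν + 1) := by
    intro n
    have h1 : (0:ℝ) ≤ ((n : ℝ) + 1) * μ := by positivity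
    have h2 : (0:ℝ) ≤ ((n : ℝ) + 1) * ν := by positivity
    nlinarith [mul_nonneg h1 h2]
  have hDne : ∀ n : ℕ, ((((n : ℝ) + 1) * μ + 1) * (((n : ℝ) + 1) * ν + 1)) ≠ 0 := by
    intro n; have := hD1 n; exact ne_of_gt (by linarith)
  -- bounds on coefficients
  have hcnorm : ∀ n : ℕ, ‖c n‖ ≤ 2 * (1 - β) := by
    intro n
    have hDn := hD1 n
    have hnum : (0:ℝ) ≤ 2 * (1 - β) := by linarith
    rw [hcdef]
    show ‖((2 * (1 - β) / ((((n : ℝ) + 1) * μ + 1) * (((n : ℝ) + 1) * ν + 1)) : ℝ) : ℂ)‖ ≤ _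
    rw [Complex.norm_real, Real.norm_eq_abs, abs_of_nonneg (by positivity)]
    exact div_le_self hnum hDn
  have hb0 : ∀ n : ℕ, ‖c n‖ ≤ (2 * (1 - β)) * ((n : ℝ) + 1) ^ 0 := by
    intro n; simpa using hcnorm n
  have hb1 : ∀ n : ℕ, ‖c n * ((n : ℂ) + 2)‖ ≤ (4 * (1 - β)) * ((n : ℝ) + 1) ^ 1 := by
    intro n
    have h2 : ‖((n : ℂ) + 2)‖ = (n : ℝ) + 2 := by
      have : ((n : ℂ) + 2) = (((n : ℝ) + 2 : ℝ) : ℂ) := by push_cast; ring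
      rw [this, Complex.norm_real, Real.norm_eq_abs, abs_of_nonneg (by positivity)]
    rw [norm_mul, h2, pow_one]
    have hn : (0:ℝ) ≤ (n : ℝ) := Nat.cast_nonneg n
    nlinarith [hcnorm n, norm_nonneg (c n)]
  have hb2 : ∀ n : ℕ, ‖c n * ((n : ℂ) + 2) * ((n : ℂ) + 1)‖ ≤
      (4 * (1 - β)) * ((n : ℝ) + 1) ^ 2 := by
    intro n
    have h1 : ‖((n : ℂ) + 1)‖ = (n : ℝ) + 1 := by
      have : ((n : ℂ) + 1) = (((n : ℝ) + 1 : ℝ) : ℂ) := by push_cast; ring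
      rw [this, Complex.norm_real, Real.norm_eq_abs, abs_of_nonneg (by positivity)]
    rw [norm_mul, h1, sq]
    have hn : (0:ℝ) ≤ (n : ℝ) := Nat.cast_nonneg n
    have := hb1 n
    nlinarith [norm_nonneg (c n * ((n : ℂ) + 2))]
  -- key algebraic identity
  have hkey : ∀ n : ℕ, c n * (((1 - α + 2 * γ : ℝ) : ℂ) + ((α - 2 * γ : ℝ) : ℂ) * ((n : ℂ) + 2)
      + (γ : ℂ) * ((n : ℂ) + 2) * ((n : ℂ) + 1)) = ((2 * (1 - β) : ℝ) : ℂ) := by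
    intro n
    have hre : (2 * (1 - β) / ((((n : ℝ) + 1) * μ + 1) * (((n : ℝ) + 1) * ν + 1))) *
        ((1 - α + 2 * γ) + (α - 2 * γ) * ((n : ℝ) + 2) + γ * ((n : ℝ) + 2) * ((n : ℝ) + 1))
        = 2 * (1 - β) := by
      have hexp : (1 - α + 2 * γ) + (α - 2 * γ) * ((n : ℝ) + 2) + γ * ((n : ℝ) + 2) * ((n : ℝ) + 1)
          = (((n : ℝ) + 1) * μ + 1) * (((n : ℝ) + 1) * ν + 1) := by
        linear_combination ((n : ℝ) + 1) * hsum.symm + (((n : ℝ) + 1))^2 * hprod.symm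
      rw [hexp, div_mul_cancel₀ _ (hDne n)]
    have := congrArg (fun x : ℝ => (x : ℂ)) hre
    push_cast at this
    rw [hcdef]
    show ((2 * (1 - β) / ((((n : ℝ) + 1) * μ + 1) * (((n : ℝ) + 1) * ν + 1)) : ℝ) : ℂ) * _ = _
    push_cast
    linear_combination this
  -- derivatives
  have hD0 : ∀ w : ℂ, ‖w‖ < 1 → HasDerivAt (fun w : ℂ => ∑' n : ℕ, c n * w ^ (n + 2))
      (∑' n : ℕ, (c n * ((n : ℂ) + 2)) * w ^ (n + 1)) w := by
    intro w hw
    have h := aux_hasDerivAt c (2 * (1 - β)) 0 1 hb0 hw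
    have hval : (∑' n : ℕ, c n * ((n : ℂ) + (1 : ℕ) + 1) * w ^ (n + 1))
        = ∑' n : ℕ, (c n * ((n : ℂ) + 2)) * w ^ (n + 1) :=
      tsum_congr fun n => by push_cast; ring
    rw [← hval]
    exact h
  have hDer1 : ∀ w : ℂ, ‖w‖ < 1 →
      HasDerivAt (fun w : ℂ => ∑' n : ℕ, (c n * ((n : ℂ) + 2)) * w ^ (n + 1))
      (∑' n : ℕ, (c n * ((n : ℂ) + 2) * ((n : ℂ) + 1)) * w ^ n) w := by
    intro w hw
    have h := aux_hasDerivAt (fun n => c n * ((n : ℂ) + 2)) (4 * (1 - β)) 1 0 hb1 hw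
    have hval : (∑' n : ℕ, (c n * ((n : ℂ) + 2)) * ((n : ℂ) + (0 : ℕ) + 1) * w ^ (n + 0))
        = ∑' n : ℕ, (c n * ((n : ℂ) + 2) * ((n : ℂ) + 1)) * w ^ n :=
      tsum_congr fun n => by push_cast; ring
    rw [← hval]
    exact h
  have hdf : ∀ w : ℂ, ‖w‖ < 1 →
      HasDerivAt f (1 + ∑' n : ℕ, (c n * ((n : ℂ) + 2)) * w ^ (n + 1)) w := by
    intro w hw
    rw [hfc]
    exact (hasDerivAt_id w).add (hD0 w hw)
  have hderiv_f : ∀ w : ℂ, ‖w‖ < 1 →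
      deriv f w = 1 + ∑' n : ℕ, (c n * ((n : ℂ) + 2)) * w ^ (n + 1) :=
    fun w hw => (hdf w hw).deriv
  have hdd : deriv (deriv f) z = ∑' n : ℕ, (c n * ((n : ℂ) + 2) * ((n : ℂ) + 1)) * z ^ n := by
    have hEv : deriv f =ᶠ[nhds z]
        fun w => 1 + ∑' n : ℕ, (c n * ((n : ℂ) + 2)) * w ^ (n + 1) := by
      filter_upwards [isOpen_ball.mem_nhds hz] with w hw
      exact hderiv_f w (by simpa [mem_ball, dist_eq_norm] using hw)
    rw [hEv.deriv_eq]
    exact ((hDer1 z hz1).const_add 1).deriv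
  -- summabilities
  have S0 : Summable (fun n : ℕ => c n * z ^ (n + 2)) :=
    aux_summable c (2 * (1 - β)) 0 2 hb0 hz1
  have S1 : Summable (fun n : ℕ => (c n * ((n : ℂ) + 2)) * z ^ (n + 1)) :=
    aux_summable _ (4 * (1 - β)) 1 1 hb1 hz1
  have S2 : Summable (fun n : ℕ => (c n * ((n : ℂ) + 2) * ((n : ℂ) + 1)) * z ^ n) :=
    aux_summable _ (4 * (1 - β)) 2 0 hb2 hz1
  -- rewrite the goal
  rw [hderiv_f z hz1, hdd, hfc]
  simp only
  set A : ℂ := ((1 - α + 2 * γ : ℝ) : ℂ) with hA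
  set B : ℂ := ((α - 2 * γ : ℝ) : ℂ) with hB
  set G : ℂ := (γ : ℂ) with hG
  set F0 : ℂ := ∑' n : ℕ, c n * z ^ (n + 2) with hF0
  set F1 : ℂ := ∑' n : ℕ, (c n * ((n : ℂ) + 2)) * z ^ (n + 1) with hF1
  set F2 : ℂ := ∑' n : ℕ, (c n * ((n : ℂ) + 2) * ((n : ℂ) + 1)) * z ^ n with hF2
  have hsplit : A * (z + F0) / z + B * (1 + F1) + G * z * F2
      = (A + B) + ((A * z⁻¹) * F0 + (B * F1 + (G * z) * F2)) := by
    field_simp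
    ring
  rw [hsplit]
  have hAB : A + B = 1 := by rw [hA, hB]; push_cast; ring
  have hT : (A * z⁻¹) * F0 + (B * F1 + (G * z) * F2)
      = ∑' n : ℕ, ((2 * (1 - β) : ℝ) : ℂ) * z ^ (n + 1) := by
    rw [hF0, hF1, hF2, ← tsum_mul_left, ← tsum_mul_left, ← tsum_mul_left,
      ← Summable.tsum_add (S1.mul_left B) (S2.mul_left (G * z)),
      ← Summable.tsum_add (S0.mul_left (A * z⁻¹)) ((S1.mul_left B).add (S2.mul_left (G * z)))]
    refine tsum_congr fun n => ?_
    have h2 : z ^ (n + 2) = z ^ (n + 1) * z := pow_succ z (n + 1)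
    have h3 : z ^ (n + 1) = z ^ n * z := pow_succ z n
    have hzz : z⁻¹ * z = 1 := inv_mul_cancel₀ hz0
    calc (A * z⁻¹) * (c n * z ^ (n + 2)) +
          (B * ((c n * ((n : ℂ) + 2)) * z ^ (n + 1)) +
            (G * z) * ((c n * ((n : ℂ) + 2) * ((n : ℂ) + 1)) * z ^ n))
        = (c n * (A + B * ((n : ℂ) + 2) + G * ((n : ℂ) + 2) * ((n : ℂ) + 1))) * z ^ (n + 1)
          + (A * (c n * z ^ (n + 1))) * (z⁻¹ * z - 1) := by
          rw [h2]; ring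
      _ = ((2 * (1 - β) : ℝ) : ℂ) * z ^ (n + 1) := by
          rw [hzz, hkey n]; ring
  rw [hT, hAB]
  have hgeom : ∑' n : ℕ, ((2 * (1 - β) : ℝ) : ℂ) * z ^ (n + 1)
      = ((2 * (1 - β) : ℝ) : ℂ) * (z * (1 - z)⁻¹) := by
    rw [tsum_mul_left]
    congr 1
    have : ∀ n : ℕ, z ^ (n + 1) = z * z ^ n := fun n => by rw [pow_succ]; ring
    simp_rw [this]
    rw [tsum_mul_left, tsum_geometric_of_norm_lt_one hz1]
  rw [hgeom]
  have h1z : (1 : ℂ) - z ≠ 0 := by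
    intro h
    have : z = 1 := by linear_combination -h
    rw [this] at hz1
    simp at hz1
  push_cast
  field_simp
  ring
end

section
/- Let μ, ν ≥ 1 with ν ≥ μ, σ ∈ [0, 1/2], ξ ∈ (0,1], and suppose 1/ξ + 2/μ − 1/ν ≥ 2 and σ ≤ (1/2)·((1/μ − 1/ν)/(1 + 1/μ − 1/ν)). Fix t ∈ (0,1) and define φ_t(x) = x(x−1) t^x log(1/t) − x( (1/ξ + 2/μ − 1/ν − 2) log(1/t) + (1 − 2σ) ) t^x. Then φ_t is decreasing on (−1, 0]. -/
open Set

theorem stmt_16 (μ ν σ ξ t : ℝ) (hμ : 1 ≤ μ) (hν : μ ≤ ν)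
    (hσ0 : 0 ≤ σ) (hσ2 : σ ≤ 1 / 2) (hξ0 : 0 < ξ) (hξ1 : ξ ≤ 1)
    (h1 : 1 / ξ + 2 / μ - 1 / ν ≥ 2)
    (hσ : σ ≤ (1 / 2) * ((1 / μ - 1 / ν) / (1 + 1 / μ - 1 / ν)))
    (ht : t ∈ Ioo (0:ℝ) 1) :
    AntitoneOn (fun x : ℝ =>
        x * (x - 1) * t ^ x * Real.log (1 / t) -
          x * ((1 / ξ + 2 / μ - 1 / ν - 2) * Real.log (1 / t) + (1 - 2 * σ)) * t ^ x)
      (Ioc (-1) 0) := by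
  obtain ⟨ht0, ht1⟩ := ht
  set L := Real.log (1 / t) with hLdef
  set c : ℝ := 1 / ξ + 2 / μ - 1 / ν - 2 with hcdef
  have hL : 0 < L := by
    apply Real.log_pos
    rw [lt_div_iff₀ ht0]; linarith
  have hlogt : Real.log t = -L := by
    rw [hLdef, Real.log_div one_ne_zero (ne_of_gt ht0), Real.log_one]; ring
  have hc : 0 ≤ c := by simp only [hcdef]; linarith
  have hA : 0 ≤ c * L + (1 - 2 * σ) := by
    have := mul_nonneg hc hL.le
    linarith
  -- derivative
  have hder : ∀ x : ℝ, HasDerivAt (fun x : ℝ =>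
      x * (x - 1) * t ^ x * L - x * (c * L + (1 - 2 * σ)) * t ^ x)
      (((1 * (x - 1) + x * 1) * t ^ x + x * (x - 1) * (t ^ x * Real.log t)) * L -
        ((1 * (c * L + (1 - 2 * σ))) * t ^ x +
          (x * (c * L + (1 - 2 * σ))) * (t ^ x * Real.log t))) x := by
    intro x
    have hp : HasDerivAt (fun x : ℝ => t ^ x) (t ^ x * Real.log t) x :=
      (Real.hasStrictDerivAt_const_rpow ht0 x).hasDerivAt
    have h2 : HasDerivAt (fun x : ℝ => x * (x - 1))
        (1 * (x - 1) + x * 1) x :=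
      (hasDerivAt_id x).mul ((hasDerivAt_id x).sub_const 1)
    have h3 := (h2.mul hp).mul_const L
    have h4 : HasDerivAt (fun x : ℝ => x * (c * L + (1 - 2 * σ)))
        (1 * (c * L + (1 - 2 * σ))) x := (hasDerivAt_id x).mul_const _
    have h5 := h4.mul hp
    exact h3.sub h5
  have key : AntitoneOn (fun x : ℝ =>
      x * (x - 1) * t ^ x * L - x * (c * L + (1 - 2 * σ)) * t ^ x) (Ioc (-1) 0) := by
    apply AntitoneOn.mono (s := Icc (-1) 0) _ Ioc_subset_Icc_self
    apply antitoneOn_of_deriv_nonpos (convex_Icc _ _)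
    · exact fun x _ => ((hder x).continuousAt).continuousWithinAt
    · intro x hx
      exact ((hder x).differentiableAt).differentiableWithinAt
    · intro x hx
      rw [interior_Icc] at hx
      obtain ⟨hx1, hx0⟩ := hx
      rw [(hder x).deriv, hlogt]
      have htx : 0 < t ^ x := Real.rpow_pos_of_pos ht0 x
      have hxx : 0 ≤ x * (x - 1) := by nlinarith
      have set1 : (1 * (x - 1) + x * 1) ≤ -1 := by linarith
      nlinarith [mul_nonneg hxx (mul_nonneg htx.le (mul_nonneg hL.le hL.le)),
        mul_nonneg (mul_nonneg (neg_nonneg.2 hx0.le) hA) (mul_nonneg htx.le hL.le),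
        mul_nonneg hA htx.le, mul_pos htx hL]
  exact key.congr fun x hx => rfl
end
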